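/- In a pricing equilibrium of the morning-commute corridor network, a bottleneck i is non-false if and only if every downstream bottleneck m < i has a strictly smaller normalized demand than bottleneck i, i.e. Q̄_m < Q̄_i for all m < i; moreover, in all the cases where the definition of the normalized demand involves the denominator μ_k − μ_{n(k)}, that denominator is strictly positive. -/

import Mathlib

open MeasureTheory Finset Set
open scoped Classical

noncomputable section

/-- Basic corridor-network primitives: `N ≥ 1` bottlenecks, rush hour `[0,T]`,
capacities `μ`, demands `Q`, free-flow times `c`, and a continuous, strictly
quasi-convex schedule-delay function `s` with minimum `0` at `td ∈ (0,T)`. -/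
def CorridorNet (N : ℕ) (T td : ℝ) (μ Q c : ℕ → ℝ) (s : ℝ → ℝ) : Prop :=
  1 ≤ N ∧ 0 < T ∧ td ∈ Set.Ioo (0:ℝ) T ∧
  (∀ i ∈ Finset.Icc 1 N, 0 < μ i ∧ 0 < Q i ∧ 0 ≤ c i) ∧
  ContinuousOn s (Set.Icc 0 T) ∧ (∀ t ∈ Set.Icc (0:ℝ) T, 0 ≤ s t) ∧ s td = 0 ∧
  (∀ a ∈ Set.Icc (0:ℝ) T, ∀ b ∈ Set.Icc (0:ℝ) T, a ≠ b →
    ∀ l ∈ Set.Ioo (0:ℝ) 1, s (l * a + (1 - l) * b) < max (s a) (s b))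

/-- Pricing equilibrium: bounded measurable nonnegative flows `q` and prices `p`
with constants `ρ`, satisfying (E1), (E2), (E3). -/
def IsPricingEq (N : ℕ) (T : ℝ) (μ Q c : ℕ → ℝ) (s : ℝ → ℝ)
    (q p : ℕ → ℝ → ℝ) (ρ : ℕ → ℝ) : Prop :=
  (∀ i ∈ Finset.Icc 1 N, Measurable (q i) ∧ Measurable (p i)) ∧
  (∀ i ∈ Finset.Icc 1 N, ∃ M : ℝ, ∀ t ∈ Set.Icc (0:ℝ) T, q i t ≤ M ∧ p i t ≤ M) ∧
  (∀ i ∈ Finset.Icc 1 N, ∀ t ∈ Set.Icc (0:ℝ) T, 0 ≤ q i t ∧ 0 ≤ p i t) ∧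
  (∀ i ∈ Finset.Icc 1 N, ∀ t ∈ Set.Icc (0:ℝ) T,
    ρ i ≤ s t + c i + ∑ j ∈ Finset.Icc 1 i, p j t ∧
    (0 < q i t → s t + c i + ∑ j ∈ Finset.Icc 1 i, p j t = ρ i)) ∧
  (∀ i ∈ Finset.Icc 1 N, ∀ t ∈ Set.Icc (0:ℝ) T,
    (∑ j ∈ Finset.Icc i N, q j t) ≤ μ i ∧
    (0 < p i t → (∑ j ∈ Finset.Icc i N, q j t) = μ i)) ∧
  (∀ i ∈ Finset.Icc 1 N, ∫ t in (0:ℝ)..T, q i t = Q i)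

/-- `[a,b]` is the smallest closed interval containing `{t ∈ [0,T] : 0 < f t}`. -/
def IsWindow (T : ℝ) (f : ℝ → ℝ) (a b : ℝ) : Prop :=
  a ≤ b ∧
  {t | t ∈ Set.Icc (0:ℝ) T ∧ 0 < f t} ⊆ Set.Icc a b ∧
  ∀ a' b' : ℝ, {t | t ∈ Set.Icc (0:ℝ) T ∧ 0 < f t} ⊆ Set.Icc a' b' →
    Set.Icc a b ⊆ Set.Icc a' b'

/-- Bottleneck `i` is non-false: its price is positive at some time. -/
def NonFalse (T : ℝ) (p : ℕ → ℝ → ℝ) (i : ℕ) : Prop :=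
  ∃ t ∈ Set.Icc (0:ℝ) T, 0 < p i t

/-- The smallest non-false index strictly greater than `k` (junk if none). -/
def nextNF (N : ℕ) (T : ℝ) (p : ℕ → ℝ → ℝ) (k : ℕ) : ℕ :=
  sInf {m | k < m ∧ m ≤ N ∧ NonFalse T p m}

/-- Normalized demand `Q̄_k`. -/
def Qbar (N : ℕ) (T : ℝ) (μ Q : ℕ → ℝ) (p : ℕ → ℝ → ℝ) (k : ℕ) : ℝ :=
  if ∃ m, k < m ∧ m ≤ N ∧ NonFalse T p m then
    (∑ j ∈ Finset.Icc k (nextNF N T p k - 1), Q j) / (μ k - μ (nextNF N T p k))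
  else (∑ j ∈ Finset.Icc k N, Q j) / μ k

namespace Stmt4Aux

structure Ctx where
  N : ℕ
  T : ℝ
  td : ℝ
  μ : ℕ → ℝ
  Q : ℕ → ℝ
  c : ℕ → ℝ
  s : ℝ → ℝ
  q : ℕ → ℝ → ℝ
  p : ℕ → ℝ → ℝ
  ρ : ℕ → ℝ
  tm : ℕ → ℝ
  tp : ℕ → ℝ
  hN : 1 ≤ N
  hT : 0 < T
  htd0 : 0 < td
  htdT : td < T
  hμ : ∀ i, 1 ≤ i → i ≤ N → 0 < μ i
  hQ : ∀ i, 1 ≤ i → i ≤ N → 0 < Q i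
  hs0 : ∀ t ∈ Set.Icc (0:ℝ) T, 0 ≤ s t
  hstd : s td = 0
  hsqc : ∀ a ∈ Set.Icc (0:ℝ) T, ∀ b ∈ Set.Icc (0:ℝ) T, a ≠ b →
    ∀ l ∈ Set.Ioo (0:ℝ) 1, s (l * a + (1 - l) * b) < max (s a) (s b)
  hqm : ∀ i, 1 ≤ i → i ≤ N → Measurable (q i)
  hbdd : ∀ i, 1 ≤ i → i ≤ N → ∃ M : ℝ, ∀ t ∈ Set.Icc (0:ℝ) T, q i t ≤ M
  hqnn : ∀ i, 1 ≤ i → i ≤ N → ∀ t ∈ Set.Icc (0:ℝ) T, 0 ≤ q i t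
  hpnn : ∀ i, 1 ≤ i → i ≤ N → ∀ t ∈ Set.Icc (0:ℝ) T, 0 ≤ p i t
  hE1 : ∀ i, 1 ≤ i → i ≤ N → ∀ t ∈ Set.Icc (0:ℝ) T,
    ρ i ≤ s t + c i + ∑ j ∈ Finset.Icc 1 i, p j t
  hE1eq : ∀ i, 1 ≤ i → i ≤ N → ∀ t ∈ Set.Icc (0:ℝ) T, 0 < q i t →
    s t + c i + ∑ j ∈ Finset.Icc 1 i, p j t = ρ i
  hE2 : ∀ i, 1 ≤ i → i ≤ N → ∀ t ∈ Set.Icc (0:ℝ) T, (∑ j ∈ Finset.Icc i N, q j t) ≤ μ i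
  hE2eq : ∀ i, 1 ≤ i → i ≤ N → ∀ t ∈ Set.Icc (0:ℝ) T, 0 < p i t →
    (∑ j ∈ Finset.Icc i N, q j t) = μ i
  hE3 : ∀ i, 1 ≤ i → i ≤ N → (∫ t in (0:ℝ)..T, q i t) = Q i
  hwm : ∀ i, 1 ≤ i → i ≤ N → tm i ≤ tp i
  hws : ∀ i, 1 ≤ i → i ≤ N → {t | t ∈ Set.Icc (0:ℝ) T ∧ 0 < q i t} ⊆ Set.Icc (tm i) (tp i)
  hwmin : ∀ i, 1 ≤ i → i ≤ N → ∀ a' b' : ℝ,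
    {t | t ∈ Set.Icc (0:ℝ) T ∧ 0 < q i t} ⊆ Set.Icc a' b' →
    Set.Icc (tm i) (tp i) ⊆ Set.Icc a' b'
  hreg1 : ∀ i, 1 ≤ i → i ≤ N → s (tm i) = ρ i - c i
  hreg2 : ∀ i, 1 ≤ i → i ≤ N → s (tp i) = ρ i - c i

variable (C : Ctx)

def v (i : ℕ) : ℝ := C.ρ i - C.c i
def P (i : ℕ) (t : ℝ) : ℝ := ∑ j ∈ Finset.Icc 1 i, C.p j t
def F (i : ℕ) (t : ℝ) : ℝ := ∑ j ∈ Finset.Icc i C.N, C.q j t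
def A (i : ℕ) : Set ℝ := {t | t ∈ Set.Icc (0:ℝ) C.T ∧ 0 < C.q i t}
def NF (i : ℕ) : Prop := ∃ t ∈ Set.Icc (0:ℝ) C.T, 0 < C.p i t
def W (i : ℕ) : Set ℝ := Set.Icc (C.tm i) (C.tp i)

lemma htdmem : C.td ∈ Set.Icc (0:ℝ) C.T := ⟨C.htd0.le, C.htdT.le⟩

/-- `s` is positive away from `td`. -/
lemma s_pos {a : ℝ} (ha : a ∈ Set.Icc (0:ℝ) C.T) (hne : a ≠ C.td) : 0 < C.s a := by
  rcases lt_or_eq_of_le (C.hs0 a ha) with h | h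
  · exact h
  exfalso
  have hmem : (1/2 : ℝ) * a + (1 - 1/2) * C.td ∈ Set.Icc (0:ℝ) C.T := by
    constructor
    · nlinarith [ha.1, C.htd0]
    · nlinarith [ha.2, C.htdT]
  have := C.hsqc a ha C.td (htdmem C) hne (1/2) (by norm_num)
  rw [C.hstd, ← h] at this
  have h2 : C.s ((1/2 : ℝ) * a + (1 - 1/2) * C.td) < 0 := by simpa using this
  exact absurd (C.hs0 _ hmem) (not_le.2 h2)

/-- `s` is strictly decreasing on `[0, td]`. -/
lemma sAnti : StrictAntiOn C.s (Set.Icc 0 C.td) := by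
  intro a ha b hb hab
  have haT : a ∈ Set.Icc (0:ℝ) C.T := ⟨ha.1, ha.2.trans C.htdT.le⟩
  have hbT : b ∈ Set.Icc (0:ℝ) C.T := ⟨hb.1, hb.2.trans C.htdT.le⟩
  have hane : a ≠ C.td := by rintro rfl; exact absurd hb.2 (not_le.2 hab)
  have hsa : 0 < C.s a := s_pos C haT hane
  rcases eq_or_lt_of_le hb.2 with h | h
  · rw [h, C.hstd]; exact hsa
  · set l : ℝ := (C.td - b) / (C.td - a) with hl
    have hta : 0 < C.td - a := by linarith
    have hl0 : 0 < l := by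
      apply div_pos; linarith; exact hta
    have hl1 : l < 1 := by
      rw [div_lt_one hta]; linarith
    have hb' : l * a + (1 - l) * C.td = b := by
      have hlm : l * (C.td - a) = C.td - b := div_mul_cancel₀ _ hta.ne'
      linear_combination -hlm
    have := C.hsqc a haT C.td (htdmem C) hane l ⟨hl0, hl1⟩
    rw [hb', C.hstd] at this
    calc C.s b < max (C.s a) 0 := this
    _ = C.s a := max_eq_left hsa.le

/-- `s` is strictly increasing on `[td, T]`. -/
lemma sMono : StrictMonoOn C.s (Set.Icc C.td C.T) := by
  intro a ha b hb hab
  have haT : a ∈ Set.Icc (0:ℝ) C.T := ⟨C.htd0.le.trans ha.1, ha.2⟩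
  have hbT : b ∈ Set.Icc (0:ℝ) C.T := ⟨C.htd0.le.trans hb.1, hb.2⟩
  have hbne : b ≠ C.td := by rintro rfl; exact absurd ha.1 (not_le.2 hab)
  have hsb : 0 < C.s b := s_pos C hbT hbne
  rcases eq_or_lt_of_le ha.1 with h | h
  · rw [← h, C.hstd]; exact hsb
  · set l : ℝ := (a - C.td) / (b - C.td) with hl
    have htb : 0 < b - C.td := by linarith
    have hl0 : 0 < l := by apply div_pos; linarith; exact htb
    have hl1 : l < 1 := by rw [div_lt_one htb]; linarith
    have ha' : l * b + (1 - l) * C.td = a := by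
      have hlm : l * (b - C.td) = a - C.td := div_mul_cancel₀ _ htb.ne'
      linear_combination hlm
    have := C.hsqc b hbT C.td (htdmem C) hbne l ⟨hl0, hl1⟩
    rw [ha', C.hstd] at this
    calc C.s a < max (C.s b) 0 := this
    _ = C.s b := max_eq_left hsb.le

/-- level sets of `s` in `[0,T]` are Lebesgue-null. -/
lemma level_null (w : ℝ) : volume {t | t ∈ Set.Icc (0:ℝ) C.T ∧ C.s t = w} = 0 := by
  have hsub : {t | t ∈ Set.Icc (0:ℝ) C.T ∧ C.s t = w} ⊆
      ({t | t ∈ Set.Icc (0:ℝ) C.td ∧ C.s t = w} ∪ {t | t ∈ Set.Icc C.td C.T ∧ C.s t = w}) := by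
    rintro t ⟨⟨h0, hT⟩, hw⟩
    rcases le_total t C.td with h | h
    · exact Or.inl ⟨⟨h0, h⟩, hw⟩
    · exact Or.inr ⟨⟨h, hT⟩, hw⟩
  refine measure_mono_null hsub (measure_union_null ?_ ?_)
  · refine Set.Countable.measure_zero ?_ _
    refine Set.Subsingleton.countable ?_
    intro a ha b hb
    exact (sAnti C).injOn ha.1 hb.1 (ha.2.trans hb.2.symm)
  · refine Set.Countable.measure_zero ?_ _
    refine Set.Subsingleton.countable ?_
    intro a ha b hb
    exact (sMono C).injOn ha.1 hb.1 (ha.2.trans hb.2.symm)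


/-! ### Basic equilibrium facts -/

lemma Pnn {i : ℕ} (hi : i ≤ C.N) {t : ℝ} (ht : t ∈ Set.Icc (0:ℝ) C.T) : 0 ≤ P C i t := by
  refine Finset.sum_nonneg fun j hj => ?_
  simp only [Finset.mem_Icc] at hj
  exact C.hpnn j hj.1 (hj.2.trans hi) t ht

lemma Pmono {m i : ℕ} (hmi : m ≤ i) (hi : i ≤ C.N) {t : ℝ} (ht : t ∈ Set.Icc (0:ℝ) C.T) :
    P C m t ≤ P C i t := by
  refine Finset.sum_le_sum_of_subset_of_nonneg (Finset.Icc_subset_Icc_right hmi) ?_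
  intro j hj _
  simp only [Finset.mem_Icc] at hj
  exact C.hpnn j hj.1 (hj.2.trans hi) t ht

lemma vle {i : ℕ} (h1 : 1 ≤ i) (h2 : i ≤ C.N) {t : ℝ} (ht : t ∈ Set.Icc (0:ℝ) C.T) :
    v C i ≤ C.s t + P C i t := by
  have := C.hE1 i h1 h2 t ht
  simp only [v, P]; linarith

lemma veq {i : ℕ} (h1 : 1 ≤ i) (h2 : i ≤ C.N) {t : ℝ} (ht : t ∈ Set.Icc (0:ℝ) C.T)
    (hq : 0 < C.q i t) : C.s t + P C i t = v C i := by
  have := C.hE1eq i h1 h2 t ht hq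
  simp only [v, P]; linarith

lemma Fanti {m i : ℕ} (hm : 1 ≤ m) (hmi : m ≤ i) {t : ℝ} (ht : t ∈ Set.Icc (0:ℝ) C.T) :
    F C i t ≤ F C m t := by
  refine Finset.sum_le_sum_of_subset_of_nonneg (Finset.Icc_subset_Icc_left hmi) ?_
  intro j hj _
  simp only [Finset.mem_Icc] at hj
  exact C.hqnn j (hm.trans hj.1) hj.2 t ht

lemma Fsplit {k n : ℕ} (hk : 1 ≤ k) (hn : 1 ≤ n) (hkn : k ≤ n) (hnN : n ≤ C.N) (t : ℝ) :
    F C k t = (∑ j ∈ Finset.Icc k (n-1), C.q j t) + F C n t := by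
  simp only [F]
  have h1 : Finset.Icc k C.N = Finset.Ioc (k-1) C.N := by
    rw [← Finset.Icc_add_one_left_eq_Ioc]; congr 1; omega
  have h2 : Finset.Icc k (n-1) = Finset.Ioc (k-1) (n-1) := by
    rw [← Finset.Icc_add_one_left_eq_Ioc]; congr 1; omega
  have h3 : Finset.Icc n C.N = Finset.Ioc (n-1) C.N := by
    rw [← Finset.Icc_add_one_left_eq_Ioc]; congr 1; omega
  rw [h1, h2, h3]
  exact (Finset.sum_Ioc_consecutive _ (by omega) (by omega)).symm

lemma qzero {i : ℕ} (h1 : 1 ≤ i) (h2 : i ≤ C.N) {t : ℝ} (ht : t ∈ Set.Icc (0:ℝ) C.T)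
    (h : ¬ 0 < C.q i t) : C.q i t = 0 :=
  le_antisymm (not_lt.1 h) (C.hqnn i h1 h2 t ht)



/-! ### The support sets `A i` -/

lemma A_pos {i : ℕ} (h1 : 1 ≤ i) (h2 : i ≤ C.N) : volume (A C i) ≠ 0 := by
  intro h0
  have h1' : ∀ᵐ t ∂(volume.restrict (Set.Ioc (0:ℝ) C.T)), t ∉ A C i :=
    ae_restrict_of_ae (measure_eq_zero_iff_ae_notMem.mp h0)
  have h2' : ∀ᵐ t ∂(volume.restrict (Set.Ioc (0:ℝ) C.T)), t ∈ Set.Ioc (0:ℝ) C.T :=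
    ae_restrict_mem measurableSet_Ioc
  have hz : ∀ᵐ t ∂(volume.restrict (Set.Ioc (0:ℝ) C.T)), C.q i t = 0 := by
    filter_upwards [h1', h2'] with t hna hmem
    have htI : t ∈ Set.Icc (0:ℝ) C.T := ⟨hmem.1.le, hmem.2⟩
    refine qzero C h1 h2 htI ?_
    intro hq
    exact hna ⟨htI, hq⟩
  have : (∫ t in (0:ℝ)..C.T, C.q i t) = 0 := by
    rw [intervalIntegral.integral_of_le C.hT.le]
    rw [integral_congr_ae hz]
    simp
  rw [C.hE3 i h1 h2] at this
  exact absurd this (ne_of_gt (C.hQ i h1 h2))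

lemma A_nonempty {i : ℕ} (h1 : 1 ≤ i) (h2 : i ≤ C.N) : (A C i).Nonempty :=
  nonempty_of_measure_ne_zero (A_pos C h1 h2)

lemma WsubT {i : ℕ} (h1 : 1 ≤ i) (h2 : i ≤ C.N) : W C i ⊆ Set.Icc (0:ℝ) C.T :=
  C.hwmin i h1 h2 0 C.T (fun _ ht => ht.1)

lemma AsubLevel {i : ℕ} (h1 : 1 ≤ i) (h2 : i ≤ C.N) {t : ℝ} (ht : t ∈ A C i) :
    C.s t ≤ v C i := by
  have := veq C h1 h2 ht.1 ht.2
  have := Pnn C h2 ht.1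
  linarith

/-- Main window characterization. -/
lemma win_main {i : ℕ} (h1 : 1 ≤ i) (h2 : i ≤ C.N) :
    0 < v C i ∧ C.tm i < C.td ∧ C.td < C.tp i ∧
      (∀ t, t ∈ W C i ↔ t ∈ Set.Icc (0:ℝ) C.T ∧ C.s t ≤ v C i) := by
  have hWT := WsubT C h1 h2
  have hmle := C.hwm i h1 h2
  have hsm : C.s (C.tm i) = v C i := C.hreg1 i h1 h2
  have hsp : C.s (C.tp i) = v C i := C.hreg2 i h1 h2
  have htmT : C.tm i ∈ Set.Icc (0:ℝ) C.T := hWT ⟨le_refl _, hmle⟩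
  have htpT : C.tp i ∈ Set.Icc (0:ℝ) C.T := hWT ⟨hmle, le_refl _⟩
  -- tm < tp
  have hmlt : C.tm i < C.tp i := by
    rcases eq_or_lt_of_le hmle with h | h
    · exfalso
      apply A_pos C h1 h2
      refine measure_mono_null (t := {C.tp i}) ?_ (measure_singleton _)
      intro t ht
      have h2' := C.hws i h1 h2 ht
      rw [← h] at h2'
      have : t = C.tp i := h ▸ le_antisymm h2'.2 h2'.1
      simpa using this
    · exact h
  -- v i positive
  have hvpos : 0 < v C i := by
    obtain ⟨t0, ht0⟩ := A_nonempty C h1 h2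
    have hle : 0 ≤ v C i := le_trans (C.hs0 t0 ht0.1) (AsubLevel C h1 h2 ht0)
    rcases eq_or_lt_of_le hle with h | h
    · exfalso
      apply A_pos C h1 h2
      refine measure_mono_null (t := {C.td}) ?_ (measure_singleton _)
      intro t ht
      have hst : C.s t = 0 := le_antisymm (by have := AsubLevel C h1 h2 ht; linarith)
        (C.hs0 t ht.1)
      by_contra hne
      exact absurd hst (ne_of_gt (s_pos C ht.1 (by simpa using hne)))
    · exact h
  have hmtd : C.s C.td < v C i := by rw [C.hstd]; exact hvpos
  -- position of td
  have hpos1 : C.tm i < C.td ∧ C.td < C.tp i := by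
    rcases le_or_gt (C.tp i) C.td with h | h
    · exfalso
      have := sAnti C ⟨htmT.1, hmle.trans h⟩ ⟨(htmT.1.trans hmle : (0:ℝ) ≤ C.tp i), h⟩ hmlt
      rw [hsm, hsp] at this; exact lt_irrefl _ this
    rcases le_or_gt C.td (C.tm i) with h' | h'
    · exfalso
      have := sMono C ⟨h', htmT.2⟩ ⟨h'.trans hmle, htpT.2⟩ hmlt
      rw [hsm, hsp] at this; exact lt_irrefl _ this
    · exact ⟨h', h⟩
  refine ⟨hvpos, hpos1.1, hpos1.2, fun t => ⟨?_, ?_⟩⟩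
  · rintro ht
    refine ⟨hWT ht, ?_⟩
    rcases le_total t C.td with h | h
    · rcases eq_or_lt_of_le ht.1 with he | hlt
      · rw [← he, hsm]
      · have := sAnti C ⟨htmT.1, hpos1.1.le⟩ ⟨(hWT ht).1, h⟩ hlt
        rw [hsm] at this; exact this.le
    · rcases eq_or_lt_of_le ht.2 with he | hlt
      · rw [he, hsp]
      · have := sMono C ⟨h, (hWT ht).2⟩ ⟨hpos1.2.le, htpT.2⟩ hlt
        rw [hsp] at this; exact this.le
  · rintro ⟨htT, hst⟩
    constructor
    · by_contra hc
      push_neg at hc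
      have htd : t < C.td := hc.trans hpos1.1
      have := sAnti C ⟨htT.1, htd.le⟩ ⟨htmT.1, hpos1.1.le⟩ hc
      rw [hsm] at this; linarith
    · by_contra hc
      push_neg at hc
      have htd : C.td < t := hpos1.2.trans hc
      have := sMono C ⟨hpos1.2.le, htpT.2⟩ ⟨htd.le, htT.2⟩ hc
      rw [hsp] at this; linarith

lemma v_pos {i : ℕ} (h1 : 1 ≤ i) (h2 : i ≤ C.N) : 0 < v C i := (win_main C h1 h2).1

lemma W_char {i : ℕ} (h1 : 1 ≤ i) (h2 : i ≤ C.N) (t : ℝ) :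
    t ∈ W C i ↔ t ∈ Set.Icc (0:ℝ) C.T ∧ C.s t ≤ v C i := (win_main C h1 h2).2.2.2 t

lemma Ioo_char {i : ℕ} (h1 : 1 ≤ i) (h2 : i ≤ C.N) (t : ℝ) :
    t ∈ Set.Ioo (C.tm i) (C.tp i) ↔ t ∈ Set.Icc (0:ℝ) C.T ∧ C.s t < v C i := by
  obtain ⟨hv, hm, hp, hch⟩ := win_main C h1 h2
  have hsm : C.s (C.tm i) = v C i := C.hreg1 i h1 h2
  have hsp : C.s (C.tp i) = v C i := C.hreg2 i h1 h2
  constructor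
  · intro ht
    have hW : t ∈ W C i := ⟨ht.1.le, ht.2.le⟩
    obtain ⟨htT, hst⟩ := (hch t).1 hW
    refine ⟨htT, ?_⟩
    rcases eq_or_lt_of_le hst with he | h
    · exfalso
      rcases le_total t C.td with h' | h'
      · have htm : C.tm i ∈ Set.Icc (0:ℝ) C.td := ⟨((WsubT C h1 h2) ⟨le_refl _, (C.hwm i h1 h2)⟩).1, hm.le⟩
        have : t = C.tm i := (sAnti C).injOn ⟨htT.1, h'⟩ htm (by rw [he, hsm])
        exact absurd this (ne_of_gt ht.1)
      · have htp : C.tp i ∈ Set.Icc C.td C.T := ⟨hp.le, ((WsubT C h1 h2) ⟨(C.hwm i h1 h2), le_refl _⟩).2⟩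
        have : t = C.tp i := (sMono C).injOn ⟨h', htT.2⟩ htp (by rw [he, hsp])
        exact absurd this (ne_of_lt ht.2)
    · exact h
  · rintro ⟨htT, hst⟩
    have hW : t ∈ W C i := (hch t).2 ⟨htT, hst.le⟩
    refine ⟨lt_of_le_of_ne hW.1 ?_, lt_of_le_of_ne hW.2 ?_⟩
    · intro he; rw [he] at hsm; linarith
    · intro he; rw [← he] at hsp; linarith

lemma W_mono {i j : ℕ} (hi1 : 1 ≤ i) (hi2 : i ≤ C.N) (hj1 : 1 ≤ j) (hj2 : j ≤ C.N)
    (hv : v C i ≤ v C j) : W C i ⊆ W C j := by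
  intro t ht
  obtain ⟨htT, hst⟩ := (W_char C hi1 hi2 t).1 ht
  exact (W_char C hj1 hj2 t).2 ⟨htT, hst.trans hv⟩

lemma W_endpoints_eq {i j : ℕ} (hi1 : 1 ≤ i) (hi2 : i ≤ C.N) (hj1 : 1 ≤ j) (hj2 : j ≤ C.N)
    (hv : v C i = v C j) : C.tm i = C.tm j ∧ C.tp i = C.tp j := by
  have h1 := W_mono C hi1 hi2 hj1 hj2 hv.le
  have h2 := W_mono C hj1 hj2 hi1 hi2 hv.ge
  have hi := C.hwm i hi1 hi2
  have hj := C.hwm j hj1 hj2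
  have e1 := h1 ⟨le_refl _, hi⟩
  have e2 := h1 ⟨hi, le_refl _⟩
  have e3 := h2 ⟨le_refl _, hj⟩
  have e4 := h2 ⟨hj, le_refl _⟩
  exact ⟨le_antisymm e3.1 e1.1, le_antisymm e2.2 e4.2⟩

lemma W_strict {i j : ℕ} (hi1 : 1 ≤ i) (hi2 : i ≤ C.N) (hj1 : 1 ≤ j) (hj2 : j ≤ C.N)
    (hv : v C i < v C j) : C.tm j < C.tm i ∧ C.tp i < C.tp j := by
  have h1 := W_mono C hi1 hi2 hj1 hj2 hv.le
  have hi := C.hwm i hi1 hi2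
  have e1 := h1 ⟨le_refl _, hi⟩
  have e2 := h1 ⟨hi, le_refl _⟩
  constructor
  · refine lt_of_le_of_ne e1.1 ?_
    intro he
    have ha := C.hreg1 i hi1 hi2
    have h2 := C.hreg1 j hj1 hj2
    rw [he] at h2
    simp only [v] at hv
    linarith
  · refine lt_of_le_of_ne e2.2 ?_
    intro he
    have ha := C.hreg2 i hi1 hi2
    have h2 := C.hreg2 j hj1 hj2
    rw [← he] at h2
    simp only [v] at hv
    linarith


/-! ### Non-false bottlenecks -/

lemma v_mono {m i : ℕ} (hm1 : 1 ≤ m) (hmi : m ≤ i) (hi2 : i ≤ C.N) : v C m ≤ v C i := by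
  obtain ⟨t0, ht0⟩ := A_nonempty C (hm1.trans hmi) hi2
  have he := veq C (hm1.trans hmi) hi2 ht0.1 ht0.2
  have h1 := vle C hm1 (hmi.trans hi2) ht0.1
  have h2 := Pmono C hmi hi2 ht0.1
  linarith

lemma p_false_zero {j : ℕ} (hf : ¬ NF C j) {t : ℝ} (ht : t ∈ Set.Icc (0:ℝ) C.T)
    (hj1 : 1 ≤ j) (hj2 : j ≤ C.N) : C.p j t = 0 := by
  refine le_antisymm ?_ (C.hpnn j hj1 hj2 t ht)
  by_contra hc
  exact hf ⟨t, ht, lt_of_not_ge hc⟩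

lemma P_eq_of_false {k l : ℕ} (hk1 : 1 ≤ k) (hkl : k ≤ l) (hlN : l ≤ C.N)
    (hf : ∀ j, k < j → j ≤ l → ¬ NF C j) {t : ℝ} (ht : t ∈ Set.Icc (0:ℝ) C.T) :
    P C l t = P C k t := by
  simp only [P]
  have h1 : Finset.Icc 1 l = Finset.Ioc 0 l := by rw [← Finset.Icc_add_one_left_eq_Ioc, zero_add]
  have h2 : Finset.Icc 1 k = Finset.Ioc 0 k := by rw [← Finset.Icc_add_one_left_eq_Ioc, zero_add]
  rw [h1, h2, ← Finset.sum_Ioc_consecutive _ (Nat.zero_le k) hkl]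
  have hz : ∑ j ∈ Finset.Ioc k l, C.p j t = 0 := by
    refine Finset.sum_eq_zero fun j hj => ?_
    simp only [Finset.mem_Ioc] at hj
    exact p_false_zero C (hf j hj.1 hj.2) ht (hk1.trans hj.1.le) (hj.2.trans hlN)
  rw [hz, add_zero]

lemma E2eq' {i : ℕ} (h1 : 1 ≤ i) (h2 : i ≤ C.N) {t : ℝ} (ht : t ∈ Set.Icc (0:ℝ) C.T)
    (hp : 0 < C.p i t) : F C i t = C.μ i := C.hE2eq i h1 h2 t ht hp

lemma E2le' {i : ℕ} (h1 : 1 ≤ i) (h2 : i ≤ C.N) {t : ℝ} (ht : t ∈ Set.Icc (0:ℝ) C.T) :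
    F C i t ≤ C.μ i := C.hE2 i h1 h2 t ht

lemma NF_mu_le {n j : ℕ} (hn1 : 1 ≤ n) (hnN : n ≤ C.N) (hNF : NF C n)
    (hj1 : 1 ≤ j) (hjn : j ≤ n) : C.μ n ≤ C.μ j := by
  obtain ⟨t', ht', hp⟩ := hNF
  have h1 := E2eq' C hn1 hnN ht' hp
  have h2 := Fanti C hj1 hjn ht'
  have h3 := E2le' C hj1 (hjn.trans hnN) ht'
  linarith

lemma NF1 : NF C 1 := by
  by_contra h
  apply A_pos C (le_refl 1) C.hN
  refine measure_mono_null ?_ (level_null C (v C 1))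
  intro t ht
  have he := veq C (le_refl 1) C.hN ht.1 ht.2
  have hP : P C 1 t = C.p 1 t := by
    simp only [P, Finset.Icc_self, Finset.sum_singleton]
  have hp0 : C.p 1 t = 0 := p_false_zero C h ht.1 (le_refl 1) C.hN
  refine ⟨ht.1, ?_⟩
  rw [hP, hp0] at he
  linarith

/-- Between consecutive non-false bottlenecks, `v` is constant. -/
lemma v_between {k n : ℕ} (hk1 : 1 ≤ k) (hkN : k ≤ C.N) (hkNF : NF C k)
    (hbet : ∀ j, k < j → j < n → ¬ NF C j)
    {j : ℕ} (hj1 : k ≤ j) (hj2 : j < n) (hjN : j ≤ C.N) : v C j = v C k := by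
  refine le_antisymm ?_ (v_mono C hk1 hj1 hjN)
  obtain ⟨t0, ht0⟩ := A_nonempty C hk1 hkN
  have he := veq C hk1 hkN ht0.1 ht0.2
  have hP : P C j t0 = P C k t0 :=
    P_eq_of_false C hk1 hj1 hjN (fun j' h1' h2' => hbet j' h1' (lt_of_le_of_lt h2' hj2)) ht0.1
  have := vle C (hk1.trans hj1) hjN ht0.1
  rw [hP] at this
  linarith

/-- Strict increase of `v` across consecutive non-false bottlenecks. -/
lemma v_strict {k n : ℕ} (hk1 : 1 ≤ k) (hkN : k ≤ C.N) (hkNF : NF C k)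
    (hkn : k < n) (hnN : n ≤ C.N) (hnNF : NF C n)
    (hbet : ∀ j, k < j → j < n → ¬ NF C j) : v C k < v C n := by
  have hn1 : 1 ≤ n := hk1.trans hkn.le
  refine lt_of_le_of_ne (v_mono C hk1 hkn.le hnN) ?_
  intro hv
  obtain ⟨t', ht', hp'⟩ := hnNF
  have hFn' : F C n t' = C.μ n := E2eq' C hn1 hnN ht' hp'
  -- prices between k and n vanish; `P (n-1) ≥ v k - s`
  have hPn1 : ∀ t ∈ Set.Icc (0:ℝ) C.T, v C k ≤ C.s t + P C (n-1) t := by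
    intro t ht
    have h1 := vle C hk1 ((Nat.le_sub_one_of_lt hkn).trans (Nat.sub_le n 1) |>.trans hnN) ht
    have hPe : P C (n-1) t = P C k t := P_eq_of_false C hk1 (Nat.le_sub_one_of_lt hkn)
      ((Nat.sub_le n 1).trans hnN) (fun j h1' h2' => hbet j h1' (by omega)) ht
    have h2 := vle C hk1 (hkN) ht
    rw [hPe]
    linarith
  have hPsplit : ∀ t : ℝ, P C n t = P C (n-1) t + C.p n t := by
    intro t
    simp only [P]
    have : Finset.Icc 1 n = Finset.Ioc 0 n := by rw [← Finset.Icc_add_one_left_eq_Ioc, zero_add]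
    have h2 : Finset.Icc 1 (n-1) = Finset.Ioc 0 (n-1) := by rw [← Finset.Icc_add_one_left_eq_Ioc, zero_add]
    rw [this, h2, ← Finset.sum_Ioc_consecutive _ (Nat.zero_le (n-1)) (Nat.sub_le n 1)]
    congr 1
    have he : Finset.Ioc (n-1) n = {n} := by
      ext x
      simp only [Finset.mem_Ioc, Finset.mem_singleton]
      omega
    rw [he, Finset.sum_singleton]
  -- no origin `l ≥ n` with `v l ≤ v k` flows at `t'`
  have hq0 : ∀ l, n ≤ l → l ≤ C.N → v C l ≤ v C k → C.q l t' = 0 := by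
    intro l hnl hlN hvl
    refine qzero C (hn1.trans hnl) hlN ht' ?_
    intro hq
    have he := veq C (hn1.trans hnl) hlN ht' hq
    have h1 : P C n t' ≤ P C l t' := Pmono C hnl hlN ht'
    have h2 := hPn1 t' ht'
    rw [hPsplit t'] at h1
    linarith
  by_cases hex : ∃ l, n < l ∧ l ≤ C.N ∧ v C k < v C l
  · obtain ⟨l0, hl0⟩ := hex
    set S : Set ℕ := {l | n < l ∧ l ≤ C.N ∧ v C k < v C l} with hS
    have hSne : S.Nonempty := ⟨l0, hl0⟩
    set lstar := sInf S with hls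
    obtain ⟨hnl, hlN, hvl⟩ : lstar ∈ S := Nat.sInf_mem hSne
    have hminS : ∀ l, n < l → l < lstar → v C l ≤ v C k := by
      intro l h1 h2
      by_contra hc
      push_neg at hc
      exact absurd (Nat.sInf_le (show l ∈ S from ⟨h1, h2.le.trans hlN, hc⟩)) (not_le.2 h2)
    obtain ⟨t0, ht0⟩ := A_nonempty C hn1 hnN
    have he0 : C.s t0 + P C n t0 = v C n := veq C hn1 hnN ht0.1 ht0.2
    have h1 := vle C (hn1.trans hnl.le) hlN ht0.1
    have hPsp : P C lstar t0 = P C n t0 + ∑ j ∈ Finset.Ioc n lstar, C.p j t0 := by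
      simp only [P]
      rw [show Finset.Icc 1 lstar = Finset.Ioc 0 lstar by rw [← Finset.Icc_add_one_left_eq_Ioc, zero_add],
        show Finset.Icc 1 n = Finset.Ioc 0 n by rw [← Finset.Icc_add_one_left_eq_Ioc, zero_add],
        ← Finset.sum_Ioc_consecutive _ (Nat.zero_le n) hnl.le]
    have hsum_pos : 0 < ∑ j ∈ Finset.Ioc n lstar, C.p j t0 := by
      rw [hPsp] at h1
      linarith [hvl, hv.ge]
    have hexj : ∃ j ∈ Finset.Ioc n lstar, 0 < C.p j t0 := by
      by_contra hc
      push_neg at hc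
      have : ∑ j ∈ Finset.Ioc n lstar, C.p j t0 ≤ 0 :=
        Finset.sum_nonpos fun j hj => hc j hj
      linarith
    obtain ⟨j0, hj0mem, hpj0⟩ := hexj
    simp only [Finset.mem_Ioc] at hj0mem
    have hj01 : 1 ≤ j0 := hn1.trans hj0mem.1.le
    have hj0N : j0 ≤ C.N := hj0mem.2.trans hlN
    have hFj0 : F C j0 t0 = C.μ j0 := E2eq' C hj01 hj0N ht0.1 hpj0
    have hsplit0 := Fsplit C hn1 hj01 hj0mem.1.le hj0N t0
    have hnmem : n ∈ Finset.Icc n (j0 - 1) := by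
      simp only [Finset.mem_Icc]
      omega
    have hterm : C.q n t0 ≤ ∑ j ∈ Finset.Icc n (j0-1), C.q j t0 := by
      refine Finset.single_le_sum (f := fun j => C.q j t0) (fun j hj => ?_) hnmem
      simp only [Finset.mem_Icc] at hj
      exact C.hqnn j (hn1.trans hj.1) (by omega) t0 ht0.1
    have hFle : F C n t0 ≤ C.μ n := E2le' C hn1 hnN ht0.1
    have hlt : C.μ j0 < C.μ n := by
      have := ht0.2
      linarith [hsplit0, hFj0, hterm, hFle, ht0.2]
    -- at t', the flow through j0 equals μ n ≤ μ j0
    have hz : ∑ j ∈ Finset.Icc n (j0-1), C.q j t' = 0 := by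
      refine Finset.sum_eq_zero fun l hl => ?_
      simp only [Finset.mem_Icc] at hl
      rcases eq_or_lt_of_le hl.1 with he | hlt'
      · exact hq0 l hl.1 (by omega) (by rw [← he, ← hv])
      · exact hq0 l hl.1 (by omega) (hminS l hlt' (by omega))
    have hsplit' := Fsplit C hn1 hj01 hj0mem.1.le hj0N t'
    have hge : C.μ n ≤ C.μ j0 := by
      have h3 := E2le' C hj01 hj0N ht'
      rw [hz] at hsplit'
      linarith [hFn']
    linarith
  · push_neg at hex
    have : F C n t' = 0 := by
      simp only [F]
      refine Finset.sum_eq_zero fun l hl => ?_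
      simp only [Finset.mem_Icc] at hl
      rcases eq_or_lt_of_le hl.1 with he | hlt
      · exact hq0 l hl.1 hl.2 (by rw [← he, ← hv])
      · exact hq0 l hl.1 hl.2 (hex l hlt hl.2)
    rw [hFn'] at this
    exact absurd this (ne_of_gt (C.hμ n hn1 hnN))


lemma Psucc {n : ℕ} (hn1 : 1 ≤ n) (t : ℝ) : P C n t = P C (n-1) t + C.p n t := by
  simp only [P]
  rw [show Finset.Icc 1 n = Finset.Ioc 0 n by rw [← Finset.Icc_add_one_left_eq_Ioc, zero_add],
    show Finset.Icc 1 (n-1) = Finset.Ioc 0 (n-1) by rw [← Finset.Icc_add_one_left_eq_Ioc, zero_add],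
    ← Finset.sum_Ioc_consecutive _ (Nat.zero_le (n-1)) (Nat.sub_le n 1)]
  congr 1
  have he : Finset.Ioc (n-1) n = {n} := by
    ext x
    simp only [Finset.mem_Ioc, Finset.mem_singleton]
    omega
  rw [he, Finset.sum_singleton]

/-- Key invariant: the flow through a non-false bottleneck saturates its capacity
throughout the interior of its window (away from finitely many levels). -/
lemma inv : ∀ n, n ≤ C.N → 1 ≤ n → NF C n → ∀ t, t ∈ Set.Ioo (C.tm n) (C.tp n) →
    (∀ j, 1 ≤ j → j ≤ C.N → v C j < v C n → C.s t ≠ v C j) → F C n t = C.μ n := by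
  intro n
  induction n using Nat.strong_induction_on with
  | _ n IH =>
  intro hnN hn1 hNF t htIoo hC
  obtain ⟨htT, hst⟩ := (Ioo_char C hn1 hnN t).1 htIoo
  by_cases hprev : ∃ k, 1 ≤ k ∧ k < n ∧ NF C k
  · obtain ⟨k0, hk01, hk0n, hk0NF⟩ := hprev
    set k := Nat.findGreatest (fun m => NF C m) (n-1) with hk
    have hkNF : NF C k := Nat.findGreatest_spec (m := k0) (by omega) hk0NF
    have hk0k : k0 ≤ k := Nat.le_findGreatest (by omega) hk0NF
    have hk1 : 1 ≤ k := hk01.trans hk0k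
    have hkn : k < n := by
      have := Nat.findGreatest_le (P := fun m => NF C m) (n-1)
      omega
    have hbet : ∀ j, k < j → j < n → ¬ NF C j := fun j h1 h2 =>
      Nat.findGreatest_is_greatest h1 (by omega)
    have hkN : k ≤ C.N := hkn.le.trans hnN
    have hvkn : v C k < v C n := v_strict C hk1 hkN hkNF hkn hnN hNF hbet
    have hsk : C.s t ≠ v C k := hC k hk1 hkN hvkn
    rcases lt_or_gt_of_ne hsk with hlt | hgt
    · -- inner region: inside the window of `k`
      have htk : t ∈ Set.Ioo (C.tm k) (C.tp k) := (Ioo_char C hk1 hkN t).2 ⟨htT, hlt⟩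
      have hFk : F C k t = C.μ k := IH k hkn hkN hk1 hkNF t htk
        (fun j hj1 hj2 hv => hC j hj1 hj2 (hv.trans hvkn))
      have hFnle : F C n t ≤ C.μ n := E2le' C hn1 hnN htT
      by_contra hne
      have hpn : C.p n t = 0 := by
        by_contra hc
        have hp : 0 < C.p n t := lt_of_le_of_ne (C.hpnn n hn1 hnN t htT) (Ne.symm hc)
        exact hne (E2eq' C hn1 hnN htT hp)
      have hPkn : P C n t = P C k t := by
        have h1 : P C (n-1) t = P C k t := P_eq_of_false C hk1 (by omega) (by omega)
          (fun j a b => hbet j a (by omega)) htT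
        rw [Psucc C hn1 t, h1, hpn, add_zero]
      have hmu_le : C.μ n ≤ C.μ k := NF_mu_le C hn1 hnN hNF hk1 hkn.le
      have hsplit := Fsplit C hk1 hn1 hkn.le hnN t
      have hFnlt : F C n t < C.μ n := lt_of_le_of_ne hFnle hne
      have hsum_pos : 0 < ∑ j ∈ Finset.Icc k (n-1), C.q j t := by linarith
      have hexl : ∃ l ∈ Finset.Icc k (n-1), 0 < C.q l t := by
        by_contra hc
        push_neg at hc
        have : ∑ j ∈ Finset.Icc k (n-1), C.q j t ≤ 0 :=
          Finset.sum_nonpos fun j hj => hc j hj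
        linarith
      obtain ⟨l, hlmem, hql⟩ := hexl
      simp only [Finset.mem_Icc] at hlmem
      have hvl : v C l = v C k := v_between C hk1 hkN hkNF hbet hlmem.1 (by omega) (by omega)
      have hPl : P C l t = P C k t := P_eq_of_false C hk1 hlmem.1 (by omega)
        (fun j a b => hbet j a (by omega)) htT
      have heql := veq C (hk1.trans hlmem.1) (by omega) htT hql
      rw [hPl, hvl] at heql
      have hvn := vle C hn1 hnN htT
      rw [hPkn] at hvn
      linarith
    · -- annulus region : `v k < s t < v n`
      have hq0 : ∀ l, 1 ≤ l → l < n → C.q l t = 0 := by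
        intro l hl1 hln
        refine qzero C hl1 (by omega) htT ?_
        intro hq
        have hlev : C.s t ≤ v C l := AsubLevel C hl1 (by omega) ⟨htT, hq⟩
        have hvlk : v C l ≤ v C k := by
          rcases lt_or_ge l k with h | h
          · exact v_mono C hl1 h.le hkN
          · exact le_of_eq (v_between C hk1 hkN hkNF hbet h hln (by omega))
        linarith
      have hFF : ∀ j, 1 ≤ j → j ≤ n → F C j t = F C n t := by
        intro j hj1 hjn
        have hsp := Fsplit C hj1 hn1 hjn hnN t
        have hz : ∑ l ∈ Finset.Icc j (n-1), C.q l t = 0 := by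
          refine Finset.sum_eq_zero fun l hl => ?_
          simp only [Finset.mem_Icc] at hl
          exact hq0 l (hj1.trans hl.1) (by omega)
        rw [hz, zero_add] at hsp
        exact hsp
      have hPpos : 0 < P C n t := by
        have := vle C hn1 hnN htT
        linarith
      have hexj : ∃ j ∈ Finset.Icc 1 n, 0 < C.p j t := by
        by_contra hc
        push_neg at hc
        have : P C n t ≤ 0 := Finset.sum_nonpos fun j hj => hc j hj
        linarith
      obtain ⟨j, hjmem, hpj⟩ := hexj
      simp only [Finset.mem_Icc] at hjmem
      have hjN : j ≤ C.N := hjmem.2.trans hnN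
      have hFj : F C j t = C.μ j := E2eq' C hjmem.1 hjN htT hpj
      have hFFj := hFF j hjmem.1 hjmem.2
      have h2 : F C n t ≤ C.μ n := E2le' C hn1 hnN htT
      have h3 : C.μ n ≤ C.μ j := NF_mu_le C hn1 hnN hNF hjmem.1 hjmem.2
      linarith
  · have hn : n = 1 := by
      by_contra h
      exact hprev ⟨1, le_refl 1, by omega, NF1 C⟩
    subst hn
    have hp : 0 < C.p 1 t := by
      have h1 := vle C hn1 hnN htT
      have hP1 : P C 1 t = C.p 1 t := by
        simp only [P, Finset.Icc_self, Finset.sum_singleton]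
      rw [hP1] at h1
      linarith
    exact E2eq' C hn1 hnN htT hp


/-! ### Measure/integration machinery -/

lemma inv_null {n : ℕ} (hn1 : 1 ≤ n) (hnN : n ≤ C.N) (hNF : NF C n) :
    volume {t | t ∈ W C n ∧ F C n t ≠ C.μ n} = 0 := by
  have hsub : {t | t ∈ W C n ∧ F C n t ≠ C.μ n} ⊆
      ({C.tm n, C.tp n} : Set ℝ) ∪
        ⋃ j ∈ Set.Icc 1 C.N, {t | t ∈ Set.Icc (0:ℝ) C.T ∧ C.s t = v C j} := by
    rintro t ⟨htW, hne⟩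
    by_cases he : t = C.tm n ∨ t = C.tp n
    · left
      simpa using he
    · right
      push_neg at he
      have htIoo : t ∈ Set.Ioo (C.tm n) (C.tp n) :=
        ⟨lt_of_le_of_ne htW.1 (Ne.symm he.1), lt_of_le_of_ne htW.2 he.2⟩
      have hcon := inv C n hnN hn1 hNF t htIoo
      by_cases hc : ∀ j, 1 ≤ j → j ≤ C.N → v C j < v C n → C.s t ≠ v C j
      · exact absurd (hcon hc) hne
      · push_neg at hc
        obtain ⟨j, hj1, hj2, _, hj4⟩ := hc
        refine Set.mem_biUnion (show j ∈ Set.Icc 1 C.N from ⟨hj1, hj2⟩) ?_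
        exact ⟨WsubT C hn1 hnN htW, hj4⟩
  refine measure_mono_null hsub (measure_union_null ?_ ?_)
  · refine Set.Countable.measure_zero ?_ _
    exact (Set.countable_singleton _).insert _
  · rw [measure_biUnion_null_iff (Set.to_countable _)]
    intro j _
    exact level_null C (v C j)

lemma q_intOn {i : ℕ} (h1 : 1 ≤ i) (h2 : i ≤ C.N) {S : Set ℝ}
    (hS : S ⊆ Set.Icc (0:ℝ) C.T) : IntegrableOn (C.q i) S := by
  obtain ⟨M, hM⟩ := C.hbdd i h1 h2
  have hbase : IntegrableOn (C.q i) (Set.Icc (0:ℝ) C.T) := by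
    refine Measure.integrableOn_of_bounded (M := M) ?_
      ((C.hqm i h1 h2).aestronglyMeasurable) ?_
    · rw [Real.volume_Icc]
      exact ENNReal.ofReal_ne_top
    · refine (ae_restrict_iff' measurableSet_Icc).2 (ae_of_all _ fun t ht => ?_)
      rw [Real.norm_eq_abs, abs_of_nonneg (C.hqnn i h1 h2 t ht)]
      exact hM t ht
  exact hbase.mono_set hS

lemma F_intOn {i : ℕ} (h1 : 1 ≤ i) {S : Set ℝ} (hS : S ⊆ Set.Icc (0:ℝ) C.T) :
    IntegrableOn (F C i) S := by
  have : F C i = fun t => ∑ j ∈ Finset.Icc i C.N, C.q j t := rfl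
  rw [this]
  exact integrable_finset_sum _ fun j hj => by
    simp only [Finset.mem_Icc] at hj
    exact q_intOn C (h1.trans hj.1) hj.2 hS

lemma qsum_intOn {k m : ℕ} (h1 : 1 ≤ k) (hm : m ≤ C.N) {S : Set ℝ}
    (hS : S ⊆ Set.Icc (0:ℝ) C.T) :
    IntegrableOn (fun t => ∑ j ∈ Finset.Icc k m, C.q j t) S :=
  integrable_finset_sum _ fun j hj => by
    simp only [Finset.mem_Icc] at hj
    exact q_intOn C (h1.trans hj.1) (hj.2.trans hm) hS

lemma intConst {a b cst : ℝ} (hab : a ≤ b) :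
    ∫ _ in Set.Icc a b, cst = cst * (b - a) := by
  rw [setIntegral_const, Real.volume_real_Icc_of_le hab, smul_eq_mul]
  ring

/-- Over any closed subinterval of the window of a non-false bottleneck `n`,
the integral of `F n` is `μ n` times the length. -/
lemma window_const {n : ℕ} (hn1 : 1 ≤ n) (hnN : n ≤ C.N) (hNF : NF C n)
    {a b : ℝ} (hab : a ≤ b) (hsub : Set.Icc a b ⊆ W C n) :
    ∫ t in Set.Icc a b, F C n t = C.μ n * (b - a) := by
  rw [show ∫ t in Set.Icc a b, F C n t = ∫ _ in Set.Icc a b, C.μ n from ?_, intConst hab]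
  have hz := inv_null C hn1 hnN hNF
  refine setIntegral_congr_ae measurableSet_Icc ?_
  filter_upwards [(measure_eq_zero_iff_ae_notMem).1 hz] with t hnm hmem
  by_contra hne
  exact hnm ⟨hsub hmem, hne⟩

/-- If the support of `q j` is contained in `[a,b] ⊆ [0,T]`, its integral there is `Q j`. -/
lemma q_int_window {j : ℕ} (h1 : 1 ≤ j) (h2 : j ≤ C.N) {a b : ℝ}
    (hsub : Set.Icc a b ⊆ Set.Icc (0:ℝ) C.T)
    (hsupp : ∀ t ∈ Set.Icc (0:ℝ) C.T, 0 < C.q j t → t ∈ Set.Icc a b) :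
    ∫ t in Set.Icc a b, C.q j t = C.Q j := by
  have hQ := C.hE3 j h1 h2
  rw [intervalIntegral.integral_of_le C.hT.le, ← integral_Icc_eq_integral_Ioc] at hQ
  have hu : Set.Icc (0:ℝ) C.T = Set.Icc a b ∪ (Set.Icc (0:ℝ) C.T \ Set.Icc a b) :=
    (Set.union_diff_cancel hsub).symm
  rw [hu, setIntegral_union disjoint_sdiff_self_right
    (measurableSet_Icc.diff measurableSet_Icc)
    (q_intOn C h1 h2 hsub) ((q_intOn C h1 h2 (le_refl _)).mono_set Set.diff_subset)] at hQ
  have hz : ∫ t in (Set.Icc (0:ℝ) C.T \ Set.Icc a b), C.q j t = 0 := by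
    rw [setIntegral_congr_fun (measurableSet_Icc.diff measurableSet_Icc)
      (g := fun _ => (0:ℝ)) ?_]
    · simp
    · intro t ht
      refine qzero C h1 h2 ht.1 fun hq => ht.2 (hsupp t ht.1 hq)
  rw [hz, add_zero] at hQ
  exact hQ


/-! ### The main integral identities -/

lemma supp_in {j k : ℕ} (hj1 : 1 ≤ j) (hjN : j ≤ C.N) (hk1 : 1 ≤ k) (hkN : k ≤ C.N)
    (hv : v C j = v C k) :
    ∀ t ∈ Set.Icc (0:ℝ) C.T, 0 < C.q j t → t ∈ Set.Icc (C.tm k) (C.tp k) := by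
  intro t ht hq
  obtain ⟨hm, hp⟩ := W_endpoints_eq C hj1 hjN hk1 hkN hv
  have : t ∈ W C j := C.hws j hj1 hjN ⟨ht, hq⟩
  rwa [W, hm, hp] at this

lemma wid_pos {k : ℕ} (hk1 : 1 ≤ k) (hkN : k ≤ C.N) : 0 < C.tp k - C.tm k := by
  obtain ⟨_, h1, h2, _⟩ := win_main C hk1 hkN
  linarith

lemma identA {k n : ℕ} (hk1 : 1 ≤ k) (hkN : k ≤ C.N) (hkNF : NF C k)
    (hkn : k < n) (hnN : n ≤ C.N) (hnNF : NF C n)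
    (hbet : ∀ j, k < j → j < n → ¬ NF C j) :
    ∑ j ∈ Finset.Icc k (n-1), C.Q j = (C.μ k - C.μ n) * (C.tp k - C.tm k) := by
  have hn1 : 1 ≤ n := hk1.trans hkn.le
  have hab : C.tm k ≤ C.tp k := C.hwm k hk1 hkN
  have hWsub : Set.Icc (C.tm k) (C.tp k) ⊆ Set.Icc (0:ℝ) C.T := WsubT C hk1 hkN
  have I1 : ∫ t in Set.Icc (C.tm k) (C.tp k), F C k t = C.μ k * (C.tp k - C.tm k) :=
    window_const C hk1 hkN hkNF hab (fun t ht => ht)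
  have I2 : ∫ t in Set.Icc (C.tm k) (C.tp k), F C n t = C.μ n * (C.tp k - C.tm k) :=
    window_const C hn1 hnN hnNF hab (W_mono C hk1 hkN hn1 hnN (v_mono C hk1 hkn.le hnN))
  have I3 : ∫ t in Set.Icc (C.tm k) (C.tp k), (∑ j ∈ Finset.Icc k (n-1), C.q j t) =
      ∑ j ∈ Finset.Icc k (n-1), C.Q j := by
    rw [integral_finset_sum _ (fun j hj => ?_)]
    · refine Finset.sum_congr rfl fun j hj => ?_
      simp only [Finset.mem_Icc] at hj
      exact q_int_window C (hk1.trans hj.1) (by omega) hWsub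
        (supp_in C (hk1.trans hj.1) (by omega) hk1 hkN
          (v_between C hk1 hkN hkNF hbet hj.1 (by omega) (by omega)))
    · simp only [Finset.mem_Icc] at hj
      exact q_intOn C (hk1.trans hj.1) (by omega) hWsub
  have hsum : ∫ t in Set.Icc (C.tm k) (C.tp k), F C k t =
      ∫ t in Set.Icc (C.tm k) (C.tp k),
        ((∑ j ∈ Finset.Icc k (n-1), C.q j t) + F C n t) :=
    setIntegral_congr_fun measurableSet_Icc fun t _ => Fsplit C hk1 hn1 hkn.le hnN t
  rw [integral_add (qsum_intOn C hk1 (by omega) hWsub) (F_intOn C hn1 hWsub), I3, I2] at hsum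
  rw [I1] at hsum
  linarith

lemma identB {k : ℕ} (hk1 : 1 ≤ k) (hkN : k ≤ C.N) (hkNF : NF C k)
    (hlast : ∀ m, k < m → m ≤ C.N → ¬ NF C m) :
    ∑ j ∈ Finset.Icc k C.N, C.Q j = C.μ k * (C.tp k - C.tm k) := by
  have hab : C.tm k ≤ C.tp k := C.hwm k hk1 hkN
  have hWsub : Set.Icc (C.tm k) (C.tp k) ⊆ Set.Icc (0:ℝ) C.T := WsubT C hk1 hkN
  have I1 : ∫ t in Set.Icc (C.tm k) (C.tp k), F C k t = C.μ k * (C.tp k - C.tm k) :=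
    window_const C hk1 hkN hkNF hab (fun t ht => ht)
  have I3 : ∫ t in Set.Icc (C.tm k) (C.tp k), F C k t =
      ∑ j ∈ Finset.Icc k C.N, C.Q j := by
    have : F C k = fun t => ∑ j ∈ Finset.Icc k C.N, C.q j t := rfl
    rw [this, integral_finset_sum _ (fun j hj => ?_)]
    · refine Finset.sum_congr rfl fun j hj => ?_
      simp only [Finset.mem_Icc] at hj
      exact q_int_window C (hk1.trans hj.1) hj.2 hWsub
        (supp_in C (hk1.trans hj.1) hj.2 hk1 hkN
          (v_between C (n := C.N + 1) hk1 hkN hkNF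
            (fun m a b => hlast m a (by omega)) hj.1 (by omega) hj.2))
    · simp only [Finset.mem_Icc] at hj
      exact q_intOn C (hk1.trans hj.1) hj.2 hWsub
  rw [I1] at I3
  linarith

lemma Fint_le {i : ℕ} (hi1 : 1 ≤ i) (hiN : i ≤ C.N) {k : ℕ} (hk1 : 1 ≤ k) (hkN : k ≤ C.N) :
    ∫ t in Set.Icc (C.tm k) (C.tp k), F C i t ≤ C.μ i * (C.tp k - C.tm k) := by
  have hab : C.tm k ≤ C.tp k := C.hwm k hk1 hkN
  have hWsub : Set.Icc (C.tm k) (C.tp k) ⊆ Set.Icc (0:ℝ) C.T := WsubT C hk1 hkN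
  calc ∫ t in Set.Icc (C.tm k) (C.tp k), F C i t
      ≤ ∫ _ in Set.Icc (C.tm k) (C.tp k), C.μ i := by
        refine setIntegral_mono_on (F_intOn C hi1 hWsub) ?_ measurableSet_Icc
          (fun t ht => E2le' C hi1 hiN (hWsub ht))
        refine integrableOn_const ?_
        rw [Real.volume_Icc]
        exact ENNReal.ofReal_ne_top
    _ = C.μ i * (C.tp k - C.tm k) := intConst hab

lemma identC {k n i : ℕ} (hk1 : 1 ≤ k) (hkN : k ≤ C.N) (hkNF : NF C k)
    (hkn : k < n) (hnN : n ≤ C.N) (hnNF : NF C n)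
    (hbet : ∀ j, k < j → j < n → ¬ NF C j)
    (hki : k < i) (hin : i < n) :
    ∑ j ∈ Finset.Icc i (n-1), C.Q j ≤ (C.μ i - C.μ n) * (C.tp k - C.tm k) := by
  have hn1 : 1 ≤ n := hk1.trans hkn.le
  have hi1 : 1 ≤ i := hk1.trans hki.le
  have hiN : i ≤ C.N := by omega
  have hab : C.tm k ≤ C.tp k := C.hwm k hk1 hkN
  have hWsub : Set.Icc (C.tm k) (C.tp k) ⊆ Set.Icc (0:ℝ) C.T := WsubT C hk1 hkN
  have I2 : ∫ t in Set.Icc (C.tm k) (C.tp k), F C n t = C.μ n * (C.tp k - C.tm k) :=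
    window_const C hn1 hnN hnNF hab (W_mono C hk1 hkN hn1 hnN (v_mono C hk1 hkn.le hnN))
  have I3 : ∫ t in Set.Icc (C.tm k) (C.tp k), (∑ j ∈ Finset.Icc i (n-1), C.q j t) =
      ∑ j ∈ Finset.Icc i (n-1), C.Q j := by
    rw [integral_finset_sum _ (fun j hj => ?_)]
    · refine Finset.sum_congr rfl fun j hj => ?_
      simp only [Finset.mem_Icc] at hj
      exact q_int_window C (hi1.trans hj.1) (by omega) hWsub
        (supp_in C (hi1.trans hj.1) (by omega) hk1 hkN
          (v_between C hk1 hkN hkNF hbet (by omega) (by omega) (by omega)))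
    · simp only [Finset.mem_Icc] at hj
      exact q_intOn C (hi1.trans hj.1) (by omega) hWsub
  have hsum : ∫ t in Set.Icc (C.tm k) (C.tp k), F C i t =
      ∫ t in Set.Icc (C.tm k) (C.tp k),
        ((∑ j ∈ Finset.Icc i (n-1), C.q j t) + F C n t) :=
    setIntegral_congr_fun measurableSet_Icc fun t _ => Fsplit C hi1 hn1 hin.le hnN t
  rw [integral_add (qsum_intOn C hi1 (by omega) hWsub) (F_intOn C hn1 hWsub), I3, I2] at hsum
  have hle := Fint_le C hi1 hiN hk1 hkN
  rw [hsum] at hle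
  linarith

lemma identD {k i : ℕ} (hk1 : 1 ≤ k) (hkN : k ≤ C.N) (hkNF : NF C k)
    (hlast : ∀ m, k < m → m ≤ C.N → ¬ NF C m)
    (hki : k < i) (hiN : i ≤ C.N) :
    ∑ j ∈ Finset.Icc i C.N, C.Q j ≤ C.μ i * (C.tp k - C.tm k) := by
  have hi1 : 1 ≤ i := hk1.trans hki.le
  have hab : C.tm k ≤ C.tp k := C.hwm k hk1 hkN
  have hWsub : Set.Icc (C.tm k) (C.tp k) ⊆ Set.Icc (0:ℝ) C.T := WsubT C hk1 hkN
  have I3 : ∫ t in Set.Icc (C.tm k) (C.tp k), F C i t =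
      ∑ j ∈ Finset.Icc i C.N, C.Q j := by
    have : F C i = fun t => ∑ j ∈ Finset.Icc i C.N, C.q j t := rfl
    rw [this, integral_finset_sum _ (fun j hj => ?_)]
    · refine Finset.sum_congr rfl fun j hj => ?_
      simp only [Finset.mem_Icc] at hj
      exact q_int_window C (hi1.trans hj.1) hj.2 hWsub
        (supp_in C (hi1.trans hj.1) hj.2 hk1 hkN
          (v_between C (n := C.N + 1) hk1 hkN hkNF
            (fun m a b => hlast m a (by omega)) (by omega) (by omega) hj.2))
    · simp only [Finset.mem_Icc] at hj
      exact q_intOn C (hi1.trans hj.1) hj.2 hWsub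
  have hle := Fint_le C hi1 hiN hk1 hkN
  rw [I3] at hle
  exact hle

/-- Strict monotonicity of `v` along non-false bottlenecks. -/
lemma v_chain {a b : ℕ} (ha1 : 1 ≤ a) (haN : a ≤ C.N) (haNF : NF C a)
    (hab : a < b) (hbN : b ≤ C.N) (hbNF : NF C b) : v C a < v C b := by
  set k := Nat.findGreatest (fun m => NF C m) (b-1) with hk
  have hkNF : NF C k := Nat.findGreatest_spec (m := a) (by omega) haNF
  have hak : a ≤ k := Nat.le_findGreatest (by omega) haNF
  have hkb : k < b := by
    have := Nat.findGreatest_le (P := fun m => NF C m) (b-1)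
    omega
  have hbet : ∀ j, k < j → j < b → ¬ NF C j := fun j h1 h2 =>
    Nat.findGreatest_is_greatest h1 (by omega)
  have hk1 : 1 ≤ k := ha1.trans hak
  have hkN : k ≤ C.N := by omega
  calc v C a ≤ v C k := v_mono C ha1 hak hkN
    _ < v C b := v_strict C hk1 hkN hkNF hkb hbN hbNF hbet


/-! ### Assembly lemmas -/

lemma NFeq : ∀ m, NonFalse C.T C.p m = NF C m := fun _ => rfl

/-- positivity of the denominator. -/
lemma HL1 {k : ℕ} (hk1 : 1 ≤ k) (hkN : k ≤ C.N)
    (hex : ∃ m, k < m ∧ m ≤ C.N ∧ NonFalse C.T C.p m) :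
    0 < C.μ k - C.μ (nextNF C.N C.T C.p k) := by
  set n := nextNF C.N C.T C.p k with hn
  obtain ⟨hkn, hnN, hnNF⟩ : k < n ∧ n ≤ C.N ∧ NonFalse C.T C.p n := Nat.sInf_mem hex
  have hmin : ∀ m, k < m → m < n → ¬ NF C m := by
    intro m h1 h2 hNF
    exact absurd (Nat.sInf_le (show m ∈ {l | _ < l ∧ l ≤ C.N ∧ NonFalse C.T C.p l} from ⟨h1, by omega, hNF⟩)) (not_le.2 h2)
  have hwidk : 0 < C.tp k - C.tm k := wid_pos C hk1 hkN
  by_cases hkNF : NF C k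
  · have hid := identA C hk1 hkN hkNF hkn hnN hnNF hmin
    have hpos : 0 < ∑ j ∈ Finset.Icc k (n-1), C.Q j := by
      refine Finset.sum_pos (fun j hj => ?_) ⟨k, Finset.mem_Icc.2 ⟨le_refl _, by omega⟩⟩
      simp only [Finset.mem_Icc] at hj
      exact C.hQ j (hk1.trans hj.1) (by omega)
    nlinarith
  · set k0 := Nat.findGreatest (fun m => NF C m) k with hk0
    have hk0NF : NF C k0 := Nat.findGreatest_spec (m := 1) hk1 (NF1 C)
    have h1k0 : 1 ≤ k0 := Nat.le_findGreatest hk1 (NF1 C)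
    have hk0k : k0 ≤ k := Nat.findGreatest_le k
    have hk0lt : k0 < k := lt_of_le_of_ne hk0k (fun he => hkNF (he ▸ hk0NF))
    have hbet : ∀ j, k0 < j → j < n → ¬ NF C j := by
      intro j hj1 hj2
      rcases le_or_gt j k with h | h
      · exact Nat.findGreatest_is_greatest hj1 h
      · exact hmin j h hj2
    have hid := identC C h1k0 (by omega) hk0NF (by omega) hnN hnNF hbet hk0lt hkn
    have hpos : 0 < ∑ j ∈ Finset.Icc k (n-1), C.Q j := by
      refine Finset.sum_pos (fun j hj => ?_) ⟨k, Finset.mem_Icc.2 ⟨le_refl _, by omega⟩⟩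
      simp only [Finset.mem_Icc] at hj
      exact C.hQ j (hk1.trans hj.1) (by omega)
    have hwid0 : 0 < C.tp k0 - C.tm k0 := wid_pos C h1k0 (by omega)
    nlinarith

/-- the normalized demand of a non-false bottleneck equals its window length. -/
lemma HL2 {i : ℕ} (hi1 : 1 ≤ i) (hiN : i ≤ C.N) (hiNF : NF C i) :
    Qbar C.N C.T C.μ C.Q C.p i = C.tp i - C.tm i := by
  by_cases hex : ∃ m, i < m ∧ m ≤ C.N ∧ NonFalse C.T C.p m
  · rw [Qbar, if_pos hex]
    set n := nextNF C.N C.T C.p i with hn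
    obtain ⟨hkn, hnN, hnNF⟩ : i < n ∧ n ≤ C.N ∧ NonFalse C.T C.p n := Nat.sInf_mem hex
    have hmin : ∀ m, i < m → m < n → ¬ NF C m := by
      intro m h1 h2 hNF
      exact absurd (Nat.sInf_le (show m ∈ {l | _ < l ∧ l ≤ C.N ∧ NonFalse C.T C.p l} from ⟨h1, by omega, hNF⟩)) (not_le.2 h2)
    have hid := identA C hi1 hiN hiNF hkn hnN hnNF hmin
    have hden : 0 < C.μ i - C.μ n := HL1 C hi1 hiN hex
    rw [hid, mul_comm, mul_div_assoc, div_self (ne_of_gt hden), mul_one]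
  · rw [Qbar, if_neg hex]
    push_neg at hex
    have hid := identB C hi1 hiN hiNF (fun m h1 h2 => hex m h1 h2)
    have hμ : 0 < C.μ i := C.hμ i hi1 hiN
    rw [hid, mul_comm, mul_div_assoc, div_self (ne_of_gt hμ), mul_one]

/-- the normalized demand of any bottleneck (with a non-false successor) is at most
the window length of the last non-false bottleneck below it. -/
lemma HL3 {m : ℕ} (hm1 : 1 ≤ m) (hmN : m ≤ C.N)
    (hex : ∃ l, m < l ∧ l ≤ C.N ∧ NonFalse C.T C.p l) :
    ∃ k0, NF C k0 ∧ 1 ≤ k0 ∧ k0 ≤ m ∧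
      Qbar C.N C.T C.μ C.Q C.p m ≤ C.tp k0 - C.tm k0 := by
  by_cases hmNF : NF C m
  · exact ⟨m, hmNF, hm1, le_refl _, le_of_eq (HL2 C hm1 hmN hmNF)⟩
  · set n := nextNF C.N C.T C.p m with hn
    obtain ⟨hkn, hnN, hnNF⟩ : m < n ∧ n ≤ C.N ∧ NonFalse C.T C.p n := Nat.sInf_mem hex
    have hmin : ∀ l, m < l → l < n → ¬ NF C l := by
      intro l h1 h2 hNF
      exact absurd (Nat.sInf_le (show l ∈ {l' | m < l' ∧ l' ≤ C.N ∧ NonFalse C.T C.p l'} from ⟨h1, by omega, hNF⟩)) (not_le.2 h2)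
    set k0 := Nat.findGreatest (fun l => NF C l) m with hk0
    have hk0NF : NF C k0 := Nat.findGreatest_spec (m := 1) hm1 (NF1 C)
    have h1k0 : 1 ≤ k0 := Nat.le_findGreatest hm1 (NF1 C)
    have hk0k : k0 ≤ m := Nat.findGreatest_le m
    have hk0lt : k0 < m := lt_of_le_of_ne hk0k (fun he => hmNF (he ▸ hk0NF))
    have hbet : ∀ j, k0 < j → j < n → ¬ NF C j := by
      intro j hj1 hj2
      rcases le_or_gt j m with h | h
      · exact Nat.findGreatest_is_greatest hj1 h
      · exact hmin j h hj2
    have hid := identC C h1k0 (by omega) hk0NF (by omega) hnN hnNF hbet hk0lt hkn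
    have hden : 0 < C.μ m - C.μ n := HL1 C hm1 hmN hex
    refine ⟨k0, hk0NF, h1k0, hk0k, ?_⟩
    rw [Qbar, if_pos hex]
    rw [div_le_iff₀ hden]
    linarith


lemma HL4 {a b : ℕ} (ha1 : 1 ≤ a) (haN : a ≤ C.N) (haNF : NF C a)
    (hab : a < b) (hbN : b ≤ C.N) (hbNF : NF C b) :
    C.tp a - C.tm a < C.tp b - C.tm b := by
  have hv := v_chain C ha1 haN haNF hab hbN hbNF
  obtain ⟨h1, h2⟩ := W_strict C ha1 haN (ha1.trans hab.le) hbN hv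
  linarith

lemma HL5 {i : ℕ} (hi1 : 1 ≤ i) (hiN : i ≤ C.N) (hiNF : ¬ NF C i) :
    ∃ k0, 1 ≤ k0 ∧ k0 < i ∧
      Qbar C.N C.T C.μ C.Q C.p i ≤ Qbar C.N C.T C.μ C.Q C.p k0 := by
  set k0 := Nat.findGreatest (fun l => NF C l) i with hk0
  have hk0NF : NF C k0 := Nat.findGreatest_spec (m := 1) hi1 (NF1 C)
  have h1k0 : 1 ≤ k0 := Nat.le_findGreatest hi1 (NF1 C)
  have hk0i : k0 ≤ i := Nat.findGreatest_le i
  have hk0lt : k0 < i := lt_of_le_of_ne hk0i (fun he => hiNF (he ▸ hk0NF))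
  refine ⟨k0, h1k0, hk0lt, ?_⟩
  by_cases hex : ∃ m, i < m ∧ m ≤ C.N ∧ NonFalse C.T C.p m
  · set n := nextNF C.N C.T C.p i with hn
    obtain ⟨hkn, hnN, hnNF⟩ : i < n ∧ n ≤ C.N ∧ NonFalse C.T C.p n := Nat.sInf_mem hex
    have hmin : ∀ m, i < m → m < n → ¬ NF C m := by
      intro m h1 h2 hNF
      exact absurd (Nat.sInf_le
        (show m ∈ {l | i < l ∧ l ≤ C.N ∧ NonFalse C.T C.p l} from ⟨h1, by omega, hNF⟩))
        (not_le.2 h2)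
    have hbet : ∀ j, k0 < j → j < n → ¬ NF C j := by
      intro j hj1 hj2
      rcases le_or_gt j i with h | h
      · exact Nat.findGreatest_is_greatest hj1 h
      · exact hmin j h hj2
    have hQk0 : Qbar C.N C.T C.μ C.Q C.p k0 = C.tp k0 - C.tm k0 :=
      HL2 C h1k0 (by omega) hk0NF
    have hid := identC C h1k0 (by omega) hk0NF (by omega) hnN hnNF hbet hk0lt hkn
    rw [hQk0, Qbar, if_pos hex, div_le_iff₀ (HL1 C hi1 hiN hex)]
    linarith
  · push_neg at hex
    have hlast : ∀ m, k0 < m → m ≤ C.N → ¬ NF C m := by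
      intro m h1 h2
      rcases le_or_gt m i with h | h
      · exact Nat.findGreatest_is_greatest h1 h
      · exact hex m h h2
    have hexk0 : ¬ ∃ m, k0 < m ∧ m ≤ C.N ∧ NonFalse C.T C.p m := by
      rintro ⟨m, a, b, c⟩
      exact hlast m a b c
    have hμk0 : 0 < C.μ k0 := C.hμ k0 h1k0 (by omega)
    have hμi : 0 < C.μ i := C.hμ i hi1 hiN
    have hidB := identB C h1k0 (by omega) hk0NF hlast
    have hidD := identD C h1k0 (by omega) hk0NF hlast hk0lt hiN
    have e1 : Qbar C.N C.T C.μ C.Q C.p k0 = C.tp k0 - C.tm k0 := by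
      rw [Qbar, if_neg hexk0, hidB, mul_comm, mul_div_assoc,
        div_self (ne_of_gt hμk0), mul_one]
    rw [Qbar, if_neg (by rintro ⟨m, a, b, c⟩; exact hex m a b c), e1, div_le_iff₀ hμi]
    linarith

end Stmt4Aux

/-- a bottleneck `i` is non-false iff every downstream bottleneck
`m < i` has strictly smaller normalized demand; moreover, whenever the
normalized demand of `k` involves the denominator `μ k − μ (n k)`, that
denominator is strictly positive. -/
theorem stmt4 (N : ℕ) (T td : ℝ) (μ Q c : ℕ → ℝ) (s : ℝ → ℝ)
    (q p : ℕ → ℝ → ℝ) (ρ : ℕ → ℝ) (tm tp : ℕ → ℝ)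
    (hnet : CorridorNet N T td μ Q c s)
    (heq : IsPricingEq N T μ Q c s q p ρ)
    (hwin : ∀ i ∈ Finset.Icc 1 N, IsWindow T (q i) (tm i) (tp i))
    (hreg : ∀ i ∈ Finset.Icc 1 N, s (tm i) = ρ i - c i ∧ s (tp i) = ρ i - c i)
    :
    (∀ k ∈ Finset.Icc 1 N, (∃ m, k < m ∧ m ≤ N ∧ NonFalse T p m) →
      0 < μ k - μ (nextNF N T p k)) ∧
    (∀ i ∈ Finset.Icc 1 N,
      (NonFalse T p i ↔
        ∀ m, 1 ≤ m → m < i → Qbar N T μ Q p m < Qbar N T μ Q p i)) := by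
  obtain ⟨hN, hT, htd, hpos, hscont, hs0, hstd, hsqc⟩ := hnet
  obtain ⟨hmeas, hbdd, hnn, hE1, hE2, hE3⟩ := heq
  set C : Stmt4Aux.Ctx :=
    { N := N, T := T, td := td, μ := μ, Q := Q, c := c, s := s, q := q, p := p, ρ := ρ,
      tm := tm, tp := tp,
      hN := hN, hT := hT, htd0 := htd.1, htdT := htd.2,
      hμ := fun i h1 h2 => (hpos i (Finset.mem_Icc.2 ⟨h1, h2⟩)).1,
      hQ := fun i h1 h2 => (hpos i (Finset.mem_Icc.2 ⟨h1, h2⟩)).2.1,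
      hs0 := hs0, hstd := hstd, hsqc := hsqc,
      hqm := fun i h1 h2 => (hmeas i (Finset.mem_Icc.2 ⟨h1, h2⟩)).1,
      hbdd := fun i h1 h2 =>
        ⟨(hbdd i (Finset.mem_Icc.2 ⟨h1, h2⟩)).choose,
          fun t ht => ((hbdd i (Finset.mem_Icc.2 ⟨h1, h2⟩)).choose_spec t ht).1⟩,
      hqnn := fun i h1 h2 t ht => (hnn i (Finset.mem_Icc.2 ⟨h1, h2⟩) t ht).1,
      hpnn := fun i h1 h2 t ht => (hnn i (Finset.mem_Icc.2 ⟨h1, h2⟩) t ht).2,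
      hE1 := fun i h1 h2 t ht => (hE1 i (Finset.mem_Icc.2 ⟨h1, h2⟩) t ht).1,
      hE1eq := fun i h1 h2 t ht => (hE1 i (Finset.mem_Icc.2 ⟨h1, h2⟩) t ht).2,
      hE2 := fun i h1 h2 t ht => (hE2 i (Finset.mem_Icc.2 ⟨h1, h2⟩) t ht).1,
      hE2eq := fun i h1 h2 t ht => (hE2 i (Finset.mem_Icc.2 ⟨h1, h2⟩) t ht).2,
      hE3 := fun i h1 h2 => hE3 i (Finset.mem_Icc.2 ⟨h1, h2⟩),
      hwm := fun i h1 h2 => (hwin i (Finset.mem_Icc.2 ⟨h1, h2⟩)).1,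
      hws := fun i h1 h2 => (hwin i (Finset.mem_Icc.2 ⟨h1, h2⟩)).2.1,
      hwmin := fun i h1 h2 => (hwin i (Finset.mem_Icc.2 ⟨h1, h2⟩)).2.2,
      hreg1 := fun i h1 h2 => (hreg i (Finset.mem_Icc.2 ⟨h1, h2⟩)).1,
      hreg2 := fun i h1 h2 => (hreg i (Finset.mem_Icc.2 ⟨h1, h2⟩)).2 } with hC
  have hCN : C.N = N := rfl
  constructor
  · intro k hk hex
    rw [Finset.mem_Icc] at hk
    exact Stmt4Aux.HL1 C hk.1 hk.2 hex
  · intro i hi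
    rw [Finset.mem_Icc] at hi
    constructor
    · intro hiNF m hm1 hmi
      have hQi : Qbar N T μ Q p i = tp i - tm i := Stmt4Aux.HL2 C hi.1 hi.2 hiNF
      obtain ⟨k0, hk0NF, h1k0, hk0m, hle⟩ :=
        Stmt4Aux.HL3 C hm1 (by omega) ⟨i, hmi, hi.2, hiNF⟩
      have hlt := Stmt4Aux.HL4 C h1k0 (by omega) hk0NF (by omega) hi.2 hiNF
      calc Qbar N T μ Q p m ≤ C.tp k0 - C.tm k0 := hle
        _ < C.tp i - C.tm i := hlt
        _ = Qbar N T μ Q p i := hQi.symm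
    · intro hall
      by_contra hiNF
      obtain ⟨k0, h1, h2, h3⟩ := Stmt4Aux.HL5 C hi.1 hi.2 hiNF
      exact absurd (hall k0 h1 h2) (not_lt.2 h3)
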